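/- Let a, b, c, d ∈ ℂ satisfy d² = a² + b² + c², and define u : ℝ⁴ → ℂ (with coordinates (t,x,y,z)) as the sum of the eight exponentials exp(a x + σ_b·b y + σ_c·c z + σ_d·d t) over all sign choices σ_b, σ_c, σ_d ∈ {+1,−1}. Then: (1) u satisfies the 3D wave equation ∂²u/∂t² = ∂²u/∂x² + ∂²u/∂y² + ∂²u/∂z² at every point of ℝ⁴; (2) (∂u/∂y)(t,x,0,z) = 0 for all t,x,z ∈ ℝ; and (3) (∂u/∂z)(t,x,y,0) = 0 for all t,x,y ∈ ℝ. -/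

import Mathlib

/-- Partial derivative in the first variable `t`. -/
noncomputable def d1 (u : ℝ × ℝ × ℝ × ℝ → ℂ) : ℝ × ℝ × ℝ × ℝ → ℂ :=
  fun p => deriv (fun s => u (s, p.2.1, p.2.2.1, p.2.2.2)) p.1

/-- Partial derivative in the second variable `x`. -/
noncomputable def d2 (u : ℝ × ℝ × ℝ × ℝ → ℂ) : ℝ × ℝ × ℝ × ℝ → ℂ :=
  fun p => deriv (fun s => u (p.1, s, p.2.2.1, p.2.2.2)) p.2.1

/-- Partial derivative in the third variable `y`. -/
noncomputable def d3 (u : ℝ × ℝ × ℝ × ℝ → ℂ) : ℝ × ℝ × ℝ × ℝ → ℂ :=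
  fun p => deriv (fun s => u (p.1, p.2.1, s, p.2.2.2)) p.2.2.1

/-- Partial derivative in the fourth variable `z`. -/
noncomputable def d4 (u : ℝ × ℝ × ℝ × ℝ → ℂ) : ℝ × ℝ × ℝ × ℝ → ℂ :=
  fun p => deriv (fun s => u (p.1, p.2.1, p.2.2.1, s)) p.2.2.2

/-- B-EPGP basis element for the 3D wave equation: the sum of the eight exponentials
`exp(a x + σ_b b y + σ_c c z + σ_d d t)` over all sign choices `σ_b, σ_c, σ_d ∈ {1,−1}`. -/
noncomputable def wave3DBasis (a b c d : ℂ) : ℝ × ℝ × ℝ × ℝ → ℂ :=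
  fun p => ∑ σb ∈ ({1, -1} : Finset ℂ), ∑ σc ∈ ({1, -1} : Finset ℂ),
    ∑ σd ∈ ({1, -1} : Finset ℂ),
      Complex.exp (a * (p.2.1 : ℂ) + σb * b * (p.2.2.1 : ℂ) + σc * c * (p.2.2.2 : ℂ) +
        σd * d * (p.1 : ℂ))

/-- Auxiliary: sum of the eight exponentials with coefficients `k σb σc σd`. -/
noncomputable def waveS (a b c d : ℂ) (k : ℂ → ℂ → ℂ → ℂ) : ℝ × ℝ × ℝ × ℝ → ℂ :=
  fun p => ∑ σb ∈ ({1, -1} : Finset ℂ), ∑ σc ∈ ({1, -1} : Finset ℂ),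
    ∑ σd ∈ ({1, -1} : Finset ℂ),
      k σb σc σd * Complex.exp (a * (p.2.1 : ℂ) + σb * b * (p.2.2.1 : ℂ) +
        σc * c * (p.2.2.2 : ℂ) + σd * d * (p.1 : ℂ))

lemma wave3DBasis_eq_waveS (a b c d : ℂ) :
    wave3DBasis a b c d = waveS a b c d (fun _ _ _ => 1) := by
  funext p; simp [wave3DBasis, waveS]

lemma hasDerivAt_lin (y : ℝ) (C K : ℂ) :
    HasDerivAt (fun s : ℝ => C + K * (s:ℂ)) K y := by
  simpa using ((Complex.ofRealCLM.hasDerivAt (x := y)).const_mul K).const_add C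

lemma d1_waveS (a b c d : ℂ) (k : ℂ → ℂ → ℂ → ℂ) :
    d1 (waveS a b c d k) = waveS a b c d (fun σb σc σd => σd * d * k σb σc σd) := by
  funext p
  simp only [d1, waveS]
  refine HasDerivAt.deriv (HasDerivAt.fun_sum fun σb _ => HasDerivAt.fun_sum fun σc _ =>
    HasDerivAt.fun_sum fun σd _ => ?_)
  have h2 := ((hasDerivAt_lin p.1 (a * (p.2.1 : ℂ) + σb * b * (p.2.2.1 : ℂ) +
      σc * c * (p.2.2.2 : ℂ)) (σd * d)).cexp).const_mul (k σb σc σd)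
  exact h2.congr_deriv (by ring)

lemma d2_waveS (a b c d : ℂ) (k : ℂ → ℂ → ℂ → ℂ) :
    d2 (waveS a b c d k) = waveS a b c d (fun σb σc σd => a * k σb σc σd) := by
  funext p
  simp only [d2, waveS]
  have harg : ∀ (σb σc σd : ℂ) (s : ℝ),
      a * (s : ℂ) + σb * b * (p.2.2.1 : ℂ) + σc * c * (p.2.2.2 : ℂ) + σd * d * (p.1 : ℂ) =
      (σb * b * (p.2.2.1 : ℂ) + σc * c * (p.2.2.2 : ℂ) + σd * d * (p.1 : ℂ)) + a * (s : ℂ) := by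
    intros; ring
  simp only [harg]
  refine HasDerivAt.deriv (HasDerivAt.fun_sum fun σb _ => HasDerivAt.fun_sum fun σc _ =>
    HasDerivAt.fun_sum fun σd _ => ?_)
  have h2 := ((hasDerivAt_lin p.2.1 (σb * b * (p.2.2.1 : ℂ) + σc * c * (p.2.2.2 : ℂ) + σd * d * (p.1 : ℂ)) a).cexp).const_mul (k σb σc σd)
  exact h2.congr_deriv (by ring)

lemma d3_waveS (a b c d : ℂ) (k : ℂ → ℂ → ℂ → ℂ) :
    d3 (waveS a b c d k) = waveS a b c d (fun σb σc σd => σb * b * k σb σc σd) := by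
  funext p
  simp only [d3, waveS]
  have harg : ∀ (σb σc σd : ℂ) (s : ℝ),
      a * (p.2.1 : ℂ) + σb * b * (s : ℂ) + σc * c * (p.2.2.2 : ℂ) + σd * d * (p.1 : ℂ) =
      (a * (p.2.1 : ℂ) + σc * c * (p.2.2.2 : ℂ) + σd * d * (p.1 : ℂ)) + σb * b * (s : ℂ) := by
    intros; ring
  simp only [harg]
  refine HasDerivAt.deriv (HasDerivAt.fun_sum fun σb _ => HasDerivAt.fun_sum fun σc _ =>
    HasDerivAt.fun_sum fun σd _ => ?_)
  have h2 := ((hasDerivAt_lin p.2.2.1 (a * (p.2.1 : ℂ) + σc * c * (p.2.2.2 : ℂ) + σd * d * (p.1 : ℂ)) (σb * b)).cexp).const_mul (k σb σc σd)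
  exact h2.congr_deriv (by ring)

lemma d4_waveS (a b c d : ℂ) (k : ℂ → ℂ → ℂ → ℂ) :
    d4 (waveS a b c d k) = waveS a b c d (fun σb σc σd => σc * c * k σb σc σd) := by
  funext p
  simp only [d4, waveS]
  have harg : ∀ (σb σc σd : ℂ) (s : ℝ),
      a * (p.2.1 : ℂ) + σb * b * (p.2.2.1 : ℂ) + σc * c * (s : ℂ) + σd * d * (p.1 : ℂ) =
      (a * (p.2.1 : ℂ) + σb * b * (p.2.2.1 : ℂ) + σd * d * (p.1 : ℂ)) + σc * c * (s : ℂ) := by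
    intros; ring
  simp only [harg]
  refine HasDerivAt.deriv (HasDerivAt.fun_sum fun σb _ => HasDerivAt.fun_sum fun σc _ =>
    HasDerivAt.fun_sum fun σd _ => ?_)
  have h2 := ((hasDerivAt_lin p.2.2.2 (a * (p.2.1 : ℂ) + σb * b * (p.2.2.1 : ℂ) + σd * d * (p.1 : ℂ)) (σc * c)).cexp).const_mul (k σb σc σd)
  exact h2.congr_deriv (by ring)

theorem wave3DBasis_solves_wave_neumann'
    (a b c d : ℂ) (h : d ^ 2 = a ^ 2 + b ^ 2 + c ^ 2) :
    (∀ p : ℝ × ℝ × ℝ × ℝ,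
      d1 (d1 (wave3DBasis a b c d)) p =
        d2 (d2 (wave3DBasis a b c d)) p + d3 (d3 (wave3DBasis a b c d)) p +
          d4 (d4 (wave3DBasis a b c d)) p) ∧
    (∀ t x z : ℝ, d3 (wave3DBasis a b c d) (t, x, 0, z) = 0) ∧
    (∀ t x y : ℝ, d4 (wave3DBasis a b c d) (t, x, y, 0) = 0) := by
  refine ⟨?_, ?_, ?_⟩
  · intro p
    rw [wave3DBasis_eq_waveS, d1_waveS, d1_waveS, d2_waveS, d2_waveS, d3_waveS, d3_waveS,
      d4_waveS, d4_waveS]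
    simp only [waveS]
    rw [← Finset.sum_add_distrib, ← Finset.sum_add_distrib]
    refine Finset.sum_congr rfl fun σb hb => ?_
    rw [← Finset.sum_add_distrib, ← Finset.sum_add_distrib]
    refine Finset.sum_congr rfl fun σc hc => ?_
    rw [← Finset.sum_add_distrib, ← Finset.sum_add_distrib]
    refine Finset.sum_congr rfl fun σd hd => ?_
    have hb2 : σb ^ 2 = 1 := by
      rcases Finset.mem_insert.1 hb with h' | h' <;> simp_all
    have hc2 : σc ^ 2 = 1 := by
      rcases Finset.mem_insert.1 hc with h' | h' <;> simp_all
    have hd2 : σd ^ 2 = 1 := by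
      rcases Finset.mem_insert.1 hd with h' | h' <;> simp_all
    set E := Complex.exp (a * (p.2.1 : ℂ) + σb * b * (p.2.2.1 : ℂ) +
      σc * c * (p.2.2.2 : ℂ) + σd * d * (p.1 : ℂ)) with hE
    linear_combination E * d ^ 2 * hd2 - E * b ^ 2 * hb2 - E * c ^ 2 * hc2 + E * h
  · intro t x z
    rw [wave3DBasis_eq_waveS, d3_waveS]
    simp only [waveS]
    simp [Finset.sum_pair (show (1:ℂ) ≠ -1 by norm_num)]
    ring
  · intro t x y
    rw [wave3DBasis_eq_waveS, d4_waveS]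
    simp only [waveS]
    simp [Finset.sum_pair (show (1:ℂ) ≠ -1 by norm_num)]
    ring
/-- The eight-term exponential combination satisfies the 3D wave equation and the Neumann
conditions on the planes `{y = 0}` and `{z = 0}` simultaneously and exactly. -/
theorem wave3DBasis_solves_wave_neumann
    (a b c d : ℂ) (h : d ^ 2 = a ^ 2 + b ^ 2 + c ^ 2) :
    (∀ p : ℝ × ℝ × ℝ × ℝ,
      d1 (d1 (wave3DBasis a b c d)) p =
        d2 (d2 (wave3DBasis a b c d)) p + d3 (d3 (wave3DBasis a b c d)) p +
          d4 (d4 (wave3DBasis a b c d)) p) ∧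
    (∀ t x z : ℝ, d3 (wave3DBasis a b c d) (t, x, 0, z) = 0) ∧
    (∀ t x y : ℝ, d4 (wave3DBasis a b c d) (t, x, y, 0) = 0) :=
  wave3DBasis_solves_wave_neumann' a b c d h
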